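/- arXiv:2201.03610 — 3 statements merged into one kernel-verified Lean document; each statement's English description precedes it below -/
import Mathlib

section
/- Let d ≥ 3 and let Φ : ℝ^d → ℂ^N be twice continuously differentiable and satisfy the twistor equation [−i∂_j − (1/d) γ_j γ·(-i∇)] Φ = 0 on ℝ^d for every j = 1,…,d. Then the spinor field DΦ := γ·(-i∇)Φ is constant on ℝ^d, i.e. there exists φ_1 ∈ ℂ^N with γ·(-i∇)Φ(x) = φ_1 for all x ∈ ℝ^d; in particular ΔΦ = 0 on ℝ^d. -/
open MeasureTheory Complex Filter ENNReal

noncomputable section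

/-- `ℝ^d` with the Euclidean norm. -/
abbrev ESp (d : ℕ) := EuclideanSpace ℝ (Fin d)

/-- Spinor space `ℂ^N` with the Hermitian norm. -/
abbrev Spinor (N : ℕ) := EuclideanSpace ℂ (Fin N)

/-- Action of an `N × N` complex matrix on a spinor. -/
def mulVecE {N : ℕ} (M : Matrix (Fin N) (Fin N) ℂ) (v : Spinor N) : Spinor N :=
  Matrix.toEuclideanLin M v

/-- Partial derivative in the `j`-th coordinate direction. -/
def pd {d : ℕ} {V : Type*} [NormedAddCommGroup V] [NormedSpace ℝ V]
    (j : Fin d) (f : ESp d → V) (x : ESp d) : V :=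
  fderiv ℝ f x (EuclideanSpace.single j 1)

/-- The Dirac operator `γ·(-i∇)ψ = ∑ⱼ γⱼ (-i ∂ⱼ ψ)`. -/
def dirac {d N : ℕ} (γ : Fin d → Matrix (Fin N) (Fin N) ℂ)
    (ψ : ESp d → Spinor N) (x : ESp d) : Spinor N :=
  ∑ j, mulVecE (γ j) ((-Complex.I) • pd j ψ x)

namespace TwAux
variable {d N : ℕ}

lemma mulVecE_smul (M : Matrix (Fin N) (Fin N) ℂ) (c : ℂ) (v : Spinor N) :
    mulVecE M (c • v) = c • mulVecE M v := _root_.map_smul (Matrix.toEuclideanLin M) c v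

lemma mulVecE_mul (A B : Matrix (Fin N) (Fin N) ℂ) (v : Spinor N) :
    mulVecE (A * B) v = mulVecE A (mulVecE B v) := by
  simp [mulVecE, Matrix.toEuclideanLin_eq_toLin, Matrix.toLin_mul _ (PiLp.basisFun 2 ℂ (Fin N)) _ A B]

lemma mulVecE_one (v : Spinor N) : mulVecE (1 : Matrix (Fin N) (Fin N) ℂ) v = v := by
  simp [mulVecE, Matrix.toEuclideanLin_eq_toLin, Matrix.toLin_one]

lemma mulVecE_matSub (A B : Matrix (Fin N) (Fin N) ℂ) (v : Spinor N) :
    mulVecE (A - B) v = mulVecE A v - mulVecE B v := by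
  simp [mulVecE, map_sub, LinearMap.sub_apply]

lemma mulVecE_matSmul (c : ℂ) (A : Matrix (Fin N) (Fin N) ℂ) (v : Spinor N) :
    mulVecE (c • A) v = c • mulVecE A v := by
  simp [mulVecE, _root_.map_smul, LinearMap.smul_apply]

/-- `v ↦ mulVecE M (c • v)` as a real continuous linear map. -/
def TCLM {N : ℕ} (M : Matrix (Fin N) (Fin N) ℂ) (c : ℂ) : Spinor N →L[ℝ] Spinor N :=
  (LinearMap.toContinuousLinearMap (c • Matrix.toEuclideanLin M)).restrictScalars ℝ

lemma TCLM_apply (M : Matrix (Fin N) (Fin N) ℂ) (c : ℂ) (v : Spinor N) :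
    TCLM M c v = mulVecE M (c • v) := by
  simp [TCLM, mulVecE, mulVecE_smul]

lemma pd_clm {V W : Type*} [NormedAddCommGroup V] [NormedSpace ℝ V]
    [NormedAddCommGroup W] [NormedSpace ℝ W]
    (L : V →L[ℝ] W) {f : ESp d → V} {x : ESp d} (hf : DifferentiableAt ℝ f x) (j : Fin d) :
    pd j (fun y => L (f y)) x = L (pd j f x) := by
  have h := (L.hasFDerivAt.comp x hf.hasFDerivAt).fderiv
  simp only [pd]
  rw [show (fun y => L (f y)) = L ∘ f from rfl, h]
  rfl

lemma pd_sum {V : Type*} [NormedAddCommGroup V] [NormedSpace ℝ V] {ι : Type*} (s : Finset ι)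
    (f : ι → ESp d → V) {x : ESp d} (hf : ∀ i, DifferentiableAt ℝ (f i) x) (j : Fin d) :
    pd j (fun y => ∑ i ∈ s, f i y) x = ∑ i ∈ s, pd j (f i) x := by
  simp only [pd, fderiv_fun_sum (fun i _ => hf i), ContinuousLinearMap.sum_apply]

end TwAux

/-- For a `C²` twistor spinor `Φ`, the spinor field `γ·(-i∇)Φ` is
constant, and in particular `ΔΦ = 0`. -/
theorem twistor_spinor_dirac_constant
    (d : ℕ) (hd : 3 ≤ d) (N : ℕ) (hN : N = 2 ^ (d / 2))
    (γ : Fin d → Matrix (Fin N) (Fin N) ℂ)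
    (hherm : ∀ j, (γ j).IsHermitian)
    (hanti : ∀ j k, γ j * γ k + γ k * γ j = if j = k then (2 : ℂ) • 1 else 0)
    (Φ : ESp d → Spinor N) (hΦ : ContDiff ℝ 2 Φ)
    (htw : ∀ (j : Fin d) (x : ESp d),
      (-Complex.I) • pd j Φ x - (((d : ℂ))⁻¹) • mulVecE (γ j) (dirac γ Φ x) = 0) :
    (∃ φ₁ : Spinor N, ∀ x : ESp d, dirac γ Φ x = φ₁)
      ∧ ∀ x : ESp d, ∑ j, pd j (fun y => pd j Φ y) x = 0 := by
  classical
  open TwAux in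
  have hdC : (d : ℂ) ≠ 0 := Nat.cast_ne_zero.mpr (by omega)
  have hd2 : (d : ℂ) - 2 ≠ 0 := by
    intro h
    have h1 : (d : ℂ) = 2 := by linear_combination h
    have : d = 2 := by exact_mod_cast h1
    omega
  have hsq : ∀ j, γ j * γ j = 1 := by
    intro j
    have h := hanti j j
    simp only [if_pos rfl] at h
    have h2 : (2:ℂ) • (γ j * γ j) = (2:ℂ) • (1 : Matrix (Fin N) (Fin N) ℂ) := by
      rw [two_smul, two_smul] at *
      exact h
    exact smul_right_injective _ (two_ne_zero) h2
  have hΦ1 : Differentiable ℝ Φ := hΦ.differentiable (by norm_num)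
  have hf'cd : ContDiff ℝ 1 (fderiv ℝ Φ) := hΦ.fderiv_right (by norm_num)
  have hf'diff : Differentiable ℝ (fderiv ℝ Φ) := hf'cd.differentiable one_ne_zero
  set e : Fin d → ESp d := fun j => EuclideanSpace.single j (1:ℝ) with he
  set Ψ : Fin d → ESp d → Spinor N := fun j x => pd j Φ x with hΨdef
  have hΨeq : ∀ j, Ψ j = fun x =>
      (ContinuousLinearMap.apply ℝ (Spinor N) (e j)) (fderiv ℝ Φ x) := fun j => rfl
  have hΨdiff : ∀ j, Differentiable ℝ (Ψ j) := fun j => by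
    rw [hΨeq j]
    exact ((ContinuousLinearMap.apply ℝ (Spinor N) (e j)).differentiable).comp hf'diff
  -- Schwarz symmetry
  have hsym : ∀ j k x, pd k (Ψ j) x = pd j (Ψ k) x := by
    intro j k x
    have hs := second_derivative_symmetric (f := Φ) (f' := fderiv ℝ Φ)
      (fun y => (hΦ1 y).hasFDerivAt) ((hf'diff x).hasFDerivAt) (e k) (e j)
    rw [hΨeq j, hΨeq k, pd_clm _ (hf'diff x) k, pd_clm _ (hf'diff x) j]
    simpa [pd] using hs
  -- Dirac
  have hDeq : dirac γ Φ = fun x => ∑ j, TCLM (γ j) (-Complex.I) (Ψ j x) := by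
    funext x
    simp [dirac, TCLM_apply]
    rfl
  have hDdiff : Differentiable ℝ (dirac γ Φ) := by
    rw [hDeq]
    exact Differentiable.fun_sum fun j _ =>
      ((TCLM (γ j) (-Complex.I)).differentiable).comp (hΨdiff j)
  -- twistor equation rewritten
  have htw' : ∀ j, Ψ j = fun x =>
      TCLM (γ j) (Complex.I * (d:ℂ)⁻¹) (dirac γ Φ x) := by
    intro j
    funext x
    have h := sub_eq_zero.mp (htw j x)
    have h2 : Ψ j x = Complex.I • (((d:ℂ)⁻¹) • mulVecE (γ j) (dirac γ Φ x)) := by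
      have := congrArg (fun v => Complex.I • v) h
      simpa [smul_smul, Complex.I_mul_I] using this
    rw [TCLM_apply, mulVecE_smul, h2, smul_smul]
  set u : Fin d → ESp d → Spinor N := fun k x => pd k (dirac γ Φ) x with hudef
  have hpdΨ : ∀ j k x, pd k (Ψ j) x = TCLM (γ k) (Complex.I * (d:ℂ)⁻¹) (u j x) := by
    intro j k x
    rw [hsym j k x, htw' k, pd_clm _ (hDdiff x) j]
  have hu : ∀ k x, u k x = ∑ j, ((d:ℂ))⁻¹ • mulVecE (γ j * γ k) (u j x) := by
    intro k x
    have h1 : u k x = ∑ j, TCLM (γ j) (-Complex.I) (pd k (Ψ j) x) := by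
      show pd k (dirac γ Φ) x = _
      rw [hDeq, pd_sum Finset.univ (fun j y => TCLM (γ j) (-Complex.I) (Ψ j y))
        (fun j => ((TCLM (γ j) (-Complex.I)).differentiable.comp (hΨdiff j)) x) k]
      refine Finset.sum_congr rfl fun j _ => ?_
      rw [pd_clm _ ((hΨdiff j) x) k]
    rw [h1]
    refine Finset.sum_congr rfl fun j _ => ?_
    rw [hpdΨ j k x, TCLM_apply, TCLM_apply, mulVecE_smul (γ k), smul_smul,
      mulVecE_smul (γ j), ← mulVecE_mul]
    congr 1
    rw [neg_mul, ← mul_assoc, Complex.I_mul_I, neg_mul, neg_neg, one_mul]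
  set S : ESp d → Spinor N := fun x => ∑ j, mulVecE (γ j) (u j x) with hSdef
  have hkey : ∀ k x, ((d:ℂ) - 2) • u k x = - mulVecE (γ k) (S x) := by
    intro k x
    have h1 : (d:ℂ) • u k x = ∑ j, mulVecE (γ j * γ k) (u j x) := by
      rw [hu k x, Finset.smul_sum]
      refine Finset.sum_congr rfl fun j _ => ?_
      rw [smul_smul, mul_inv_cancel₀ hdC, one_smul]
    have h2 : ∀ j, mulVecE (γ j * γ k) (u j x)
        = (if j = k then (2:ℂ) • u j x else 0) - mulVecE (γ k) (mulVecE (γ j) (u j x)) := by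
      intro j
      have : γ j * γ k = (if j = k then (2:ℂ) • 1 else 0) - γ k * γ j := by
        rw [← hanti j k]; exact (add_sub_cancel_right _ _).symm
      rw [this, mulVecE_matSub, mulVecE_mul]
      congr 1
      split
      · rw [mulVecE_matSmul, mulVecE_one]
      · simp [mulVecE]
    rw [Finset.sum_congr rfl (fun j _ => h2 j), Finset.sum_sub_distrib,
      Finset.sum_ite_eq' Finset.univ k (fun j => (2:ℂ) • u j x)] at h1
    simp only [Finset.mem_univ, if_pos] at h1
    have h3 : ∑ j, mulVecE (γ k) (mulVecE (γ j) (u j x)) = mulVecE (γ k) (S x) := by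
      rw [hSdef]
      exact (map_sum (Matrix.toEuclideanLin (γ k)) _ _).symm
    rw [h3] at h1
    have : ((d:ℂ) - 2) • u k x = (d:ℂ) • u k x - (2:ℂ) • u k x := by
      rw [sub_smul]
    rw [this, h1]
    abel
  have hS0 : ∀ x, S x = 0 := by
    intro x
    have h1 : ∑ k, mulVecE (γ k) (((d:ℂ) - 2) • u k x)
        = ∑ k : Fin d, (- mulVecE (γ k) (mulVecE (γ k) (S x))) := by
      refine Finset.sum_congr rfl fun k _ => ?_
      rw [hkey k x]
      exact map_neg (Matrix.toEuclideanLin (γ k)) _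
    have hL : ∑ k, mulVecE (γ k) (((d:ℂ) - 2) • u k x) = ((d:ℂ) - 2) • S x := by
      rw [hSdef, Finset.smul_sum]
      exact Finset.sum_congr rfl fun k _ => mulVecE_smul _ _ _
    have hR : ∑ k : Fin d, (- mulVecE (γ k) (mulVecE (γ k) (S x))) = -((d:ℂ) • S x) := by
      rw [Finset.sum_neg_distrib]
      congr 1
      calc ∑ k : Fin d, mulVecE (γ k) (mulVecE (γ k) (S x))
          = ∑ k : Fin d, S x := by
            refine Finset.sum_congr rfl fun k _ => ?_
            rw [← mulVecE_mul, hsq k, mulVecE_one]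
        _ = (d : ℕ) • S x := by simp
        _ = (d:ℂ) • S x := (Nat.cast_smul_eq_nsmul ℂ d (S x)).symm
    rw [hL, hR] at h1
    have h2 : ((d:ℂ) - 2 + (d:ℂ)) • S x = 0 := by
      rw [add_smul, h1]; abel
    have hnz : (d:ℂ) - 2 + (d:ℂ) ≠ 0 := by
      intro h
      have h1 : (d:ℂ) = 1 := by linear_combination h / 2
      have : d = 1 := by exact_mod_cast h1
      omega
    exact (smul_eq_zero.mp h2).resolve_left hnz
  have hu0 : ∀ k x, u k x = 0 := by
    intro k x
    have := hkey k x
    rw [hS0 x] at this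
    simp only [mulVecE, map_zero, neg_zero] at this
    exact (smul_eq_zero.mp this).resolve_left hd2
  constructor
  · refine ⟨dirac γ Φ 0, fun x => ?_⟩
    refine is_const_of_fderiv_eq_zero hDdiff (fun y => ?_) x 0
    refine ContinuousLinearMap.coe_injective (Module.Basis.ext (PiLp.basisFun 2 ℝ (Fin d)) fun i => ?_)
    have hb : (PiLp.basisFun 2 ℝ (Fin d)) i = EuclideanSpace.single i (1:ℝ) := by
      rw [PiLp.basisFun_apply]
    show fderiv ℝ (dirac γ Φ) y ((PiLp.basisFun 2 ℝ (Fin d)) i) = 0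
    rw [hb]
    exact hu0 i y
  · intro x
    have hterm : ∀ j : Fin d, pd j (fun y => pd j Φ y) x = 0 := by
      intro j
      have h := hpdΨ j j x
      rw [hu0 j x, map_zero] at h
      exact h
    exact Finset.sum_eq_zero fun j _ => hterm j
end
end

section
/- Let d ≥ 3 be odd, let Σ be the d×d skew-symmetric matrix of the context, and define 𝒜(x) := d (1+|x|²)^{−2} ((1−|x|²) e_1 + 2 x_1 x + 2 Σ x). Then |𝒜(x)| = d/(1+|x|²) for every x ∈ ℝ^d, and consequently ‖𝒜‖_{L^d(ℝ^d)}² = d² (∫_{ℝ^d} (1+|x|²)^{−d} dx)^{2/d} = (d²/4)·|𝕊^d|^{2/d} = (d/(d−2))·S_d. -/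
open MeasureTheory Complex Filter ENNReal

noncomputable section

/-- The skew-symmetric `d×d` matrix `Σ`: block diagonal with a `1×1` zero block
followed by `(d-1)/2` blocks `((0,-1),(1,0))` (0-based indices: `Σ_{j,j+1} = -1`,
`Σ_{j+1,j} = 1` for odd `j`). -/
def SigmaMat (d : ℕ) : Matrix (Fin d) (Fin d) ℝ :=
  Matrix.of fun j k =>
    if Odd (j : ℕ) ∧ (k : ℕ) = (j : ℕ) + 1 then -1
    else if Odd (k : ℕ) ∧ (j : ℕ) = (k : ℕ) + 1 then 1
    else 0

/-- The vector field `𝒜(x) = d(1+|x|²)^{-2}((1-|x|²)e₁ + 2x₁x + 2Σx)`. -/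
def curlyA (d : ℕ) (x : ESp d) : ESp d :=
  (WithLp.equiv 2 (∀ _ : Fin d, ℝ)).symm fun k =>
    (d : ℝ) * ((1 + ‖x‖ ^ 2) ^ 2)⁻¹ *
      ((if (k : ℕ) = 0 then 1 - ‖x‖ ^ 2 else 0)
        + 2 * x ⟨0, lt_of_le_of_lt (Nat.zero_le (k : ℕ)) k.isLt⟩ * x k
        + 2 * ((SigmaMat d).mulVec (fun j => x j)) k)

/-- Surface measure of the unit sphere `𝕊^d ⊂ ℝ^{d+1}`. -/
def sphereVol (d : ℕ) : ℝ :=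
  ((d : ℝ) + 1) * (volume (Metric.ball (0 : EuclideanSpace ℝ (Fin (d+1))) 1)).toReal

/-- The sharp Sobolev constant `S_d = (d(d-2)/4)·|𝕊^d|^{2/d}`. -/
def Sd (d : ℕ) : ℝ :=
  ((d : ℝ) * ((d : ℝ) - 2) / 4) * sphereVol d ^ ((2 : ℝ) / (d : ℝ))

variable {d : ℕ}

lemma succ_lt_of_odd (hodd : Odd d) {k : Fin d} (hk : Odd (k : ℕ)) : (k : ℕ) + 1 < d := by
  obtain ⟨m, hm⟩ := hk; obtain ⟨n, hn⟩ := hodd; have := k.isLt; omega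

/-- The involution pairing `2j+1 ↔ 2j+2`, fixing `0`. -/
def sflip (hodd : Odd d) (k : Fin d) : Fin d :=
  if h : Odd (k : ℕ) then ⟨(k : ℕ) + 1, succ_lt_of_odd hodd h⟩
  else if h0 : (k : ℕ) = 0 then k
  else ⟨(k : ℕ) - 1, lt_trans (Nat.sub_lt (Nat.pos_of_ne_zero h0) one_pos) k.isLt⟩

lemma flip_val_odd (hodd : Odd d) {k : Fin d} (h : Odd (k : ℕ)) :
    ((sflip hodd k : Fin d) : ℕ) = (k : ℕ) + 1 := by simp [sflip, h]

lemma flip_val_even_pos (hodd : Odd d) {k : Fin d} (h : ¬ Odd (k : ℕ)) (h0 : (k : ℕ) ≠ 0) :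
    ((sflip hodd k : Fin d) : ℕ) = (k : ℕ) - 1 := by simp [sflip, h, h0]

lemma flip_zero (hodd : Odd d) {k : Fin d} (h0 : (k : ℕ) = 0) : sflip hodd k = k := by
  simp [sflip, h0, Nat.odd_iff]

lemma flip_involutive (hodd : Odd d) : Function.Involutive (sflip hodd) := by
  intro k
  by_cases h : Odd (k : ℕ)
  · have h1 : ((sflip hodd k : Fin d) : ℕ) = (k : ℕ) + 1 := flip_val_odd hodd h
    have h2 : ¬ Odd ((sflip hodd k : Fin d) : ℕ) := by rw [h1]; simp [Nat.odd_iff] at h ⊢; omega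
    have h3 : ((sflip hodd k : Fin d) : ℕ) ≠ 0 := by omega
    apply Fin.ext; rw [flip_val_even_pos hodd h2 h3, h1]; omega
  · by_cases h0 : (k : ℕ) = 0
    · rw [flip_zero hodd h0, flip_zero hodd h0]
    · have h1 : ((sflip hodd k : Fin d) : ℕ) = (k : ℕ) - 1 := flip_val_even_pos hodd h h0
      have h2 : Odd ((sflip hodd k : Fin d) : ℕ) := by rw [h1]; simp [Nat.odd_iff] at h ⊢; omega
      apply Fin.ext; rw [flip_val_odd hodd h2, h1]; omega

lemma sigma_mulVec_odd (hodd : Odd d) (x : Fin d → ℝ) {k : Fin d} (h : Odd (k : ℕ)) :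
    (SigmaMat d).mulVec x k = - x (sflip hodd k) := by
  have hlt := succ_lt_of_odd hodd h
  have : (⟨(k : ℕ) + 1, hlt⟩ : Fin d) = sflip hodd k := by
    apply Fin.ext; rw [flip_val_odd hodd h]
  rw [← this]
  show dotProduct _ x = _
  rw [dotProduct]
  rw [Finset.sum_eq_single (⟨(k : ℕ) + 1, hlt⟩ : Fin d)]
  · simp only [SigmaMat, Matrix.of_apply]
    simp [h]
  · intro j _ hj
    simp only [SigmaMat, Matrix.of_apply]
    rw [if_neg, if_neg]
    · ring
    · rintro ⟨hj1, hj2⟩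
      simp [Nat.odd_iff] at h hj1; omega
    · rintro ⟨-, hj2⟩
      exact hj (Fin.ext hj2)
  · simp

lemma sigma_mulVec_even_pos (hodd : Odd d) (x : Fin d → ℝ) {k : Fin d} (h : ¬ Odd (k : ℕ))
    (h0 : (k : ℕ) ≠ 0) : (SigmaMat d).mulVec x k = x (sflip hodd k) := by
  have hlt : (k : ℕ) - 1 < d := lt_trans (Nat.sub_lt (Nat.pos_of_ne_zero h0) one_pos) k.isLt
  have : (⟨(k : ℕ) - 1, hlt⟩ : Fin d) = sflip hodd k := by
    apply Fin.ext; rw [flip_val_even_pos hodd h h0]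
  rw [← this]
  show dotProduct _ x = _
  rw [dotProduct]
  rw [Finset.sum_eq_single (⟨(k : ℕ) - 1, hlt⟩ : Fin d)]
  · simp only [SigmaMat, Matrix.of_apply]
    rw [if_neg, if_pos]
    · ring
    · constructor
      · simp [Nat.odd_iff] at h ⊢; omega
      · omega
    · rintro ⟨hk, -⟩; exact h hk
  · intro j _ hj
    simp only [SigmaMat, Matrix.of_apply]
    rw [if_neg, if_neg]
    · ring
    · rintro ⟨hj1, hj2⟩
      apply hj; apply Fin.ext; simp only; omega
    · rintro ⟨hk, -⟩; exact h hk
  · simp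

lemma sigma_mulVec_zero (x : Fin d → ℝ) {k : Fin d} (h0 : (k : ℕ) = 0) :
    (SigmaMat d).mulVec x k = 0 := by
  show dotProduct _ x = _
  rw [dotProduct]
  apply Finset.sum_eq_zero
  intro j _
  simp only [SigmaMat, Matrix.of_apply]
  rw [if_neg, if_neg]
  · ring
  · rintro ⟨-, hj⟩; omega
  · rintro ⟨hk, -⟩; simp [h0, Nat.odd_iff] at hk

lemma sum_sq_mulVec (hd : 0 < d) (hodd : Odd d) (x : Fin d → ℝ) :
    ∑ k, ((SigmaMat d).mulVec x k)^2 = (∑ k, x k ^ 2) - x ⟨0, hd⟩ ^ 2 := by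
  have key : ∀ k : Fin d, ((SigmaMat d).mulVec x k)^2
      = (x (sflip hodd k))^2 - (if (k:ℕ) = 0 then (x k)^2 else 0) := by
    intro k
    by_cases h0 : (k:ℕ) = 0
    · rw [sigma_mulVec_zero x h0, flip_zero hodd h0, if_pos h0]; ring
    · rw [if_neg h0]
      by_cases h : Odd (k:ℕ)
      · rw [sigma_mulVec_odd hodd x h]; ring
      · rw [sigma_mulVec_even_pos hodd x h h0]; ring
  simp only [key]
  rw [Finset.sum_sub_distrib]
  congr 1
  · exact Equiv.sum_comp ((flip_involutive hodd).toPerm _) (fun k => x k ^ 2)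
  · have : ∀ k : Fin d, (if (k:ℕ) = 0 then (x k)^2 else 0)
        = (if k = ⟨0, hd⟩ then (x ⟨0, hd⟩)^2 else 0) := by
      intro k
      by_cases h0 : (k:ℕ) = 0
      · have : k = ⟨0, hd⟩ := Fin.ext h0
        simp [this]
      · rw [if_neg h0, if_neg (fun h => h0 (by rw [h]))]
    simp only [this]
    simp

lemma sum_mul_mulVec (hodd : Odd d) (x : Fin d → ℝ) :
    ∑ k, x k * (SigmaMat d).mulVec x k = 0 := by
  refine Finset.sum_involution (fun a _ => sflip hodd a) ?_ ?_ (fun a ha => Finset.mem_univ _)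
    (fun a ha => flip_involutive hodd a)
  · intro a _
    show x a * (SigmaMat d).mulVec x a + x (sflip hodd a) * (SigmaMat d).mulVec x (sflip hodd a) = 0
    by_cases h0 : (a:ℕ) = 0
    · rw [flip_zero hodd h0, sigma_mulVec_zero x h0]; ring
    · by_cases h : Odd (a:ℕ)
      · have h1 : ((sflip hodd a : Fin d) : ℕ) = (a : ℕ) + 1 := flip_val_odd hodd h
        have h2 : ¬ Odd ((sflip hodd a : Fin d) : ℕ) := by
          rw [h1]; simp [Nat.odd_iff] at h ⊢; omega
        have h3 : ((sflip hodd a : Fin d) : ℕ) ≠ 0 := by omega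
        rw [sigma_mulVec_odd hodd x h, sigma_mulVec_even_pos hodd x h2 h3,
          flip_involutive hodd a]
        ring
      · have h1 : ((sflip hodd a : Fin d) : ℕ) = (a : ℕ) - 1 := flip_val_even_pos hodd h h0
        have h2 : Odd ((sflip hodd a : Fin d) : ℕ) := by
          rw [h1]; simp [Nat.odd_iff] at h ⊢; omega
        rw [sigma_mulVec_even_pos hodd x h h0, sigma_mulVec_odd hodd x h2,
          flip_involutive hodd a]
        ring
  · intro a _ hfa
    have h0 : (a:ℕ) ≠ 0 := by
      intro h0
      rw [sigma_mulVec_zero x h0] at hfa; simp at hfa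
    intro heq
    replace heq : sflip hodd a = a := heq
    by_cases h : Odd (a:ℕ)
    · have := flip_val_odd hodd h; rw [heq] at this; omega
    · have := flip_val_even_pos hodd h h0; rw [heq] at this; omega

lemma norm_sq_esp (x : ESp d) : ‖x‖ ^ 2 = ∑ i, x i ^ 2 := by
  rw [EuclideanSpace.norm_eq, Real.sq_sqrt (by positivity)]
  simp [Real.norm_eq_abs, sq_abs]

lemma norm_curlyA (hd : 3 ≤ d) (hodd : Odd d) (x : ESp d) :
    ‖curlyA d x‖ = (d : ℝ) / (1 + ‖x‖ ^ 2) := by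
  have hd0 : 0 < d := by omega
  set k₀ : Fin d := ⟨0, hd0⟩ with hk₀
  set R : ℝ := ‖x‖ ^ 2 with hR
  have hRnn : 0 ≤ R := by positivity
  have h1R : 0 < 1 + R := by linarith
  have hsum : ∑ i, x i ^ 2 = R := (norm_sq_esp x).symm
  set s : Fin d → ℝ := (SigmaMat d).mulVec (fun j => x j) with hs
  have hs0 : s k₀ = 0 := sigma_mulVec_zero _ rfl
  have hss : ∑ k, s k ^ 2 = R - x k₀ ^ 2 := by
    rw [sum_sq_mulVec hd0 hodd, hsum]
  have hxs : ∑ k, x k * s k = 0 := sum_mul_mulVec hodd _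
  -- the norm squared
  have hnorm : ‖curlyA d x‖ = Real.sqrt (∑ k : Fin d, ((d : ℝ) * ((1 + R) ^ 2)⁻¹ *
      ((if (k : ℕ) = 0 then 1 - R else 0) + 2 * x k₀ * x k + 2 * s k)) ^ 2) := by
    rw [curlyA, EuclideanSpace.norm_eq]
    congr 1
    apply Finset.sum_congr rfl
    intro k _
    rw [WithLp.equiv_symm_apply, PiLp.toLp_apply, Real.norm_eq_abs, _root_.sq_abs]
  rw [hnorm]
  have expand : ∀ k : Fin d, ((if (k : ℕ) = 0 then 1 - R else 0) + 2 * x k₀ * x k + 2 * s k) ^ 2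
      = (if k = k₀ then (1-R)^2 + 4*(1-R)*(x k₀ * x k₀) + 4*(1-R)*(s k₀) else 0)
        + (4 * x k₀ ^ 2) * x k ^ 2 + 4 * s k ^ 2 + (8 * x k₀) * (x k * s k) := by
    intro k
    by_cases h0 : (k : ℕ) = 0
    · have hk : k = k₀ := Fin.ext h0
      rw [if_pos h0, if_pos hk, hk]; ring
    · rw [if_neg h0, if_neg (fun h => h0 (by rw [h]))]; ring
  have hv : ∑ k : Fin d, (((if (k : ℕ) = 0 then 1 - R else 0) + 2 * x k₀ * x k + 2 * s k)) ^ 2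
      = (1 + R) ^ 2 := by
    simp only [expand]
    rw [Finset.sum_add_distrib, Finset.sum_add_distrib, Finset.sum_add_distrib]
    rw [Finset.sum_ite_eq' Finset.univ k₀, if_pos (Finset.mem_univ _)]
    rw [← Finset.mul_sum, ← Finset.mul_sum, ← Finset.mul_sum, hsum, hss, hxs, hs0]
    ring
  have hfac : ∑ k : Fin d, ((d : ℝ) * ((1 + R) ^ 2)⁻¹ *
      ((if (k : ℕ) = 0 then 1 - R else 0) + 2 * x k₀ * x k + 2 * s k)) ^ 2
      = ((d : ℝ) * ((1 + R) ^ 2)⁻¹) ^ 2 * ((1 + R) ^ 2) := by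
    rw [← hv, Finset.mul_sum]
    exact Finset.sum_congr rfl fun k _ => by ring
  rw [hfac]
  rw [show ((d : ℝ) * ((1 + R) ^ 2)⁻¹) ^ 2 * ((1 + R) ^ 2) = ((d:ℝ)/(1+R))^2 by
    field_simp]
  rw [Real.sqrt_sq (by positivity)]

lemma realBeta {a b : ℝ} (ha : 0 < a) (hb : 0 < b) :
    ∫ x in (0:ℝ)..1, x ^ (a-1) * (1-x) ^ (b-1)
      = Real.Gamma a * Real.Gamma b / Real.Gamma (a+b) := by
  have h := Complex.Gamma_mul_Gamma_eq_betaIntegral (s := (a:ℂ)) (t := (b:ℂ))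
    (by simpa using ha) (by simpa using hb)
  have hbeta : Complex.betaIntegral (a:ℂ) (b:ℂ)
      = ((∫ x in (0:ℝ)..1, x ^ (a-1) * (1-x) ^ (b-1) : ℝ) : ℂ) := by
    rw [Complex.betaIntegral, ← intervalIntegral.integral_ofReal]
    apply intervalIntegral.integral_congr
    intro x hx
    rw [Set.uIcc_of_le (zero_le_one), Set.mem_Icc] at hx
    push_cast
    rw [Complex.ofReal_cpow hx.1, Complex.ofReal_cpow (by linarith [hx.2] : (0:ℝ) ≤ 1 - x)]
    push_cast
    ring
  rw [hbeta, ← Complex.ofReal_add, Complex.Gamma_ofReal, Complex.Gamma_ofReal,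
    Complex.Gamma_ofReal, ← Complex.ofReal_mul, ← Complex.ofReal_mul] at h
  have h' := Complex.ofReal_inj.mp h
  have hG : Real.Gamma (a+b) ≠ 0 := (Real.Gamma_pos_of_pos (by linarith)).ne'
  field_simp [h']
  rw [h']; ring

lemma betaIoi {a b : ℝ} (ha : 0 < a) (hb : 0 < b) :
    ∫ u in Set.Ioi (0:ℝ), u ^ (a-1) * (1+u) ^ (-(a+b))
      = Real.Gamma a * Real.Gamma b / Real.Gamma (a+b) := by
  have himg : (fun x : ℝ => x / (1-x)) '' Set.Ioo 0 1 = Set.Ioi 0 := by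
    ext u
    constructor
    · rintro ⟨x, ⟨hx0, hx1⟩, rfl⟩
      exact div_pos hx0 (by linarith)
    · intro hu
      refine ⟨u / (1+u), ⟨?_, ?_⟩, ?_⟩
      · exact div_pos hu (by linarith [Set.mem_Ioi.mp hu])
      · rw [div_lt_one (by linarith [Set.mem_Ioi.mp hu])]; linarith
      · have h1u : (1:ℝ) + u ≠ 0 := by have := Set.mem_Ioi.mp hu; positivity
        field_simp
        ring
  have hderiv : ∀ x ∈ Set.Ioo (0:ℝ) 1,
      HasDerivWithinAt (fun x : ℝ => x / (1-x)) (((1-x)^2)⁻¹) (Set.Ioo 0 1) x := by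
    intro x hx
    have hne : (1:ℝ) - x ≠ 0 := by rw [Set.mem_Ioo] at hx; intro h; linarith [hx.2]
    have : HasDerivAt (fun x : ℝ => x / (1-x))
        ((1 * (1-x) - x * (0-1)) / (1-x)^2) x :=
      (hasDerivAt_id x).div (((hasDerivAt_const x (1:ℝ)).sub (hasDerivAt_id x))) hne
    refine this.hasDerivWithinAt.congr_deriv ?_
    ring
  have hinj : Set.InjOn (fun x : ℝ => x / (1-x)) (Set.Ioo 0 1) := by
    intro x hx y hy h
    rw [Set.mem_Ioo] at hx hy
    have hx1 : (1:ℝ) - x ≠ 0 := by intro hc; linarith [hx.2]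
    have hy1 : (1:ℝ) - y ≠ 0 := by intro hc; linarith [hy.2]
    field_simp at h
    linarith
  have key := integral_image_eq_integral_abs_deriv_smul measurableSet_Ioo hderiv hinj
    (fun u => u ^ (a-1) * (1+u) ^ (-(a+b)))
  rw [himg] at key
  rw [key]
  have : ∀ x ∈ Set.Ioo (0:ℝ) 1, |((1-x)^2)⁻¹| • ((x / (1-x)) ^ (a-1) * (1 + x/(1-x)) ^ (-(a+b)))
      = x ^ (a-1) * (1-x) ^ (b-1) := by
    intro x hx
    rw [Set.mem_Ioo] at hx
    have hx1 : (0:ℝ) < 1 - x := by linarith [hx.2]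
    have h1 : (1:ℝ) + x/(1-x) = (1-x)⁻¹ := by field_simp; ring
    rw [h1, smul_eq_mul, abs_of_pos (by positivity),
      Real.div_rpow hx.1.le hx1.le,
      Real.inv_rpow hx1.le, ← Real.rpow_neg hx1.le, neg_neg]
    rw [show ((1-x)^2)⁻¹ = ((1-x):ℝ)^(-(2:ℝ)) by
      rw [Real.rpow_neg hx1.le, Real.rpow_two]]
    rw [div_eq_mul_inv, ← Real.rpow_neg hx1.le]
    calc (1-x:ℝ)^(-(2:ℝ)) * (x ^ (a-1) * (1-x)^(-(a-1)) * (1-x)^(a+b))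
        = x^(a-1) * ((1-x)^(-(2:ℝ)) * ((1-x)^(-(a-1)) * (1-x)^(a+b))) := by ring
      _ = x^(a-1) * (1-x)^(b-1) := by
          rw [← Real.rpow_add hx1, ← Real.rpow_add hx1,
            show -(2:ℝ) + (-(a-1) + (a+b)) = b-1 by ring]
  rw [setIntegral_congr_fun measurableSet_Ioo this]
  rw [← integral_Ioc_eq_integral_Ioo, ← intervalIntegral.integral_of_le zero_le_one]
  exact realBeta ha hb

lemma Jval (d : ℕ) (hd : 3 ≤ d) :
    ∫ y in Set.Ioi (0:ℝ), y ^ (d-1) * (1+y^2) ^ (-(d:ℝ))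
      = Real.Gamma ((d:ℝ)/2)^2 / (2 * Real.Gamma d) := by
  have hd2 : (0:ℝ) < (d:ℝ)/2 := by positivity
  have hbeta := betaIoi (a := (d:ℝ)/2) (b := (d:ℝ)/2) hd2 hd2
  rw [show (d:ℝ)/2 + (d:ℝ)/2 = (d:ℝ) by ring] at hbeta
  have hsub := integral_comp_rpow_Ioi_of_pos
    (g := fun u => u ^ ((d:ℝ)/2 - 1) * (1+u) ^ (-(d:ℝ))) (p := (2:ℝ)) two_pos
  have hpt : ∀ y ∈ Set.Ioi (0:ℝ),
      ((2:ℝ) * y ^ ((2:ℝ)-1)) • ((fun u => u ^ ((d:ℝ)/2 - 1) * (1+u) ^ (-(d:ℝ))) (y ^ (2:ℝ)))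
      = 2 * (y ^ (d-1) * (1+y^2) ^ (-(d:ℝ))) := by
    intro y hy
    have hy0 : 0 < y := Set.mem_Ioi.mp hy
    simp only [smul_eq_mul]
    rw [show (2:ℝ)-1 = 1 by norm_num, Real.rpow_one]
    rw [show y ^ (2:ℝ) = y ^ (2:ℕ) by rw [← Real.rpow_natCast y 2]; norm_num]
    rw [← Real.rpow_natCast y 2, ← Real.rpow_mul hy0.le]
    rw [show (2:ℕ) * ((d:ℝ)/2 - 1) = ((d-2:ℕ):ℝ) by
      rw [Nat.cast_sub (by omega)]; push_cast; ring]
    rw [Real.rpow_natCast y (d-2), Real.rpow_natCast y 2]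
    rw [show d - 1 = (d-2)+1 from by omega, pow_succ]
    ring
  rw [setIntegral_congr_fun measurableSet_Ioi hpt] at hsub
  rw [integral_const_mul] at hsub
  beta_reduce at hsub
  rw [hbeta] at hsub
  rw [show Real.Gamma ((d:ℝ)/2) * Real.Gamma ((d:ℝ)/2) = Real.Gamma ((d:ℝ)/2)^2 by ring]
    at hsub
  rw [show Real.Gamma ((d:ℝ)/2)^2 / (2*Real.Gamma (d:ℝ))
      = (Real.Gamma ((d:ℝ)/2)^2 / Real.Gamma (d:ℝ))/2 by ring]
  linarith

lemma key_integral (d : ℕ) (hd : 3 ≤ d) :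
    ∫ x : ESp d, (1 + ‖x‖ ^ 2) ^ (-(d:ℝ))
      = Real.sqrt Real.pi ^ d * Real.Gamma ((d:ℝ)/2) / Real.Gamma d := by
  haveI : Nonempty (Fin d) := ⟨⟨0, by omega⟩⟩
  have h : ∫ x : ESp d, (1 + ‖x‖^2) ^ (-(d:ℝ))
      = (Module.finrank ℝ (ESp d)) • (volume (Metric.ball (0:ESp d) 1)).toReal •
        ∫ y in Set.Ioi (0:ℝ), y ^ (Module.finrank ℝ (ESp d) - 1) • (1+y^2) ^ (-(d:ℝ)) :=
    integral_fun_norm_addHaar volume (fun r : ℝ => (1 + r^2) ^ (-(d:ℝ)))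
  rw [finrank_euclideanSpace_fin] at h
  simp only [smul_eq_mul, nsmul_eq_mul] at h
  rw [h, Jval d hd]
  have hball : (volume (Metric.ball (0:ESp d) 1)).toReal
      = Real.sqrt Real.pi ^ d / Real.Gamma ((d:ℝ)/2 + 1) := by
    rw [EuclideanSpace.volume_ball]
    simp only [Fintype.card_fin]
    rw [ENNReal.ofReal_one, one_pow, one_mul, ENNReal.toReal_ofReal
      (div_nonneg (by positivity) (Real.Gamma_pos_of_pos (by positivity)).le)]
  rw [hball]
  have hG2 : Real.Gamma ((d:ℝ)/2 + 1) = ((d:ℝ)/2) * Real.Gamma ((d:ℝ)/2) :=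
    Real.Gamma_add_one (by positivity)
  rw [hG2]
  have hGpos : 0 < Real.Gamma ((d:ℝ)/2) := Real.Gamma_pos_of_pos (by positivity)
  have hGdpos : 0 < Real.Gamma (d:ℝ) := Real.Gamma_pos_of_pos (by positivity)
  have hdpos : (0:ℝ) < d := by positivity
  field_simp

lemma sphereVol_eq (d : ℕ) :
    sphereVol d = 2 * Real.sqrt Real.pi ^ (d+1) / Real.Gamma (((d:ℝ)+1)/2) := by
  rw [sphereVol, EuclideanSpace.volume_ball]
  simp only [Fintype.card_fin]
  rw [ENNReal.ofReal_one, one_pow, one_mul, ENNReal.toReal_ofReal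
    (div_nonneg (by positivity) (Real.Gamma_pos_of_pos (by positivity)).le)]
  have hG2 : Real.Gamma (((d:ℕ)+1:ℝ)/2 + 1) = ((((d:ℕ):ℝ)+1)/2) * Real.Gamma (((d:ℝ)+1)/2) :=
    Real.Gamma_add_one (by positivity)
  rw [show (((d+1:ℕ)):ℝ)/2 + 1 = ((d:ℕ)+1:ℝ)/2 + 1 by push_cast; ring] at *
  rw [hG2]
  have hGpos : 0 < Real.Gamma (((d:ℝ)+1)/2) := Real.Gamma_pos_of_pos (by positivity)
  have : ((d:ℝ)+1) ≠ 0 := by positivity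
  push_cast
  field_simp

lemma sphereVol_nonneg (d : ℕ) : 0 ≤ sphereVol d := by
  rw [sphereVol]; positivity

lemma key_integral' (d : ℕ) (hd : 3 ≤ d) :
    ∫ x : ESp d, (1 + ‖x‖ ^ 2) ^ (-(d:ℝ)) = sphereVol d / 2^d := by
  rw [key_integral d hd, sphereVol_eq d]
  have hGd : 0 < Real.Gamma (d:ℝ) := Real.Gamma_pos_of_pos (by positivity)
  have hGh : 0 < Real.Gamma ((d:ℝ)/2) := Real.Gamma_pos_of_pos (by positivity)
  have hGh1 : 0 < Real.Gamma (((d:ℝ)+1)/2) := Real.Gamma_pos_of_pos (by positivity)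
  have hdup := Real.Gamma_mul_Gamma_add_half ((d:ℝ)/2)
  rw [show (d:ℝ)/2 + 1/2 = ((d:ℝ)+1)/2 by ring, show 2*((d:ℝ)/2) = (d:ℝ) by ring] at hdup
  -- hdup : Γ(d/2) * Γ((d+1)/2) = Γ(d) * 2^(1-d) * √π
  have h2d : ((2:ℝ)^d : ℝ) = (2:ℝ)^(d:ℝ) := by rw [Real.rpow_natCast]
  have hpow : (2:ℝ)^((1:ℝ)-(d:ℝ)) * (2:ℝ)^(d:ℝ) = 2 := by
    rw [← Real.rpow_add two_pos]; norm_num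
  have hsq : Real.sqrt Real.pi ^ (d+1) = Real.sqrt Real.pi ^ d * Real.sqrt Real.pi := pow_succ _ _
  rw [hsq]
  have h21d : (2:ℝ)^((1:ℝ)-(d:ℝ)) * (2:ℝ)^d = 2 := by
    rw [h2d, ← Real.rpow_add two_pos]; norm_num
  field_simp
  linear_combination (2^d) * hdup + (Real.sqrt Real.pi * Real.Gamma (d:ℝ)) * h21d

lemma eLpNorm_part (d : ℕ) (hd : 3 ≤ d) (f : ESp d → ESp d)
    (hf : ∀ x, ‖f x‖ = (d:ℝ) / (1 + ‖x‖^2)) :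
    (eLpNorm f (d:ℝ≥0∞) volume).toReal ^ 2
      = (d:ℝ)^2 * (∫ x : ESp d, (1 + ‖x‖^2) ^ (-(d:ℝ)))^((2:ℝ)/(d:ℝ)) := by
  have hdR : (0:ℝ) < d := by positivity
  have hdR' : (0:ℝ) < d := by exact_mod_cast (by omega : 0 < d)
  have hd0 : (d:ℝ≥0∞) ≠ 0 := by
    simp only [ne_eq, Nat.cast_eq_zero]; omega
  have hdt : (d:ℝ≥0∞) ≠ ⊤ := natCast_ne_top d
  set I := ∫ x : ESp d, (1 + ‖x‖^2) ^ (-(d:ℝ)) with hIdef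
  have hI : 0 ≤ I := integral_nonneg fun x => by positivity
  have hInt : Integrable (fun x : ESp d => (1 + ‖x‖^2) ^ (-(d:ℝ))) volume := by
    have hlt : (Module.finrank ℝ (ESp d) : ℝ) < 2*(d:ℝ) := by
      rw [finrank_euclideanSpace_fin]; linarith
    have h := integrable_rpow_neg_one_add_norm_sq (E := ESp d) (μ := volume) hlt
    have heq : (fun x : ESp d => (1+‖x‖^2)^(-(d:ℝ)))
        = (fun x : ESp d => (1+‖x‖^2)^(-(2*(d:ℝ))/2)) := by
      funext x; congr 1; ring
    rw [heq]; exact h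
  have hFeq : (fun x : ESp d => ((d:ℝ)/(1+‖x‖^2))^(d:ℝ))
      = fun x : ESp d => (d:ℝ)^(d:ℝ) * (1+‖x‖^2)^(-(d:ℝ)) := by
    funext x
    have h1 : (0:ℝ) < 1 + ‖x‖^2 := by positivity
    rw [Real.div_rpow (by positivity) h1.le, Real.rpow_neg h1.le, div_eq_mul_inv]
  have hFInt : Integrable (fun x : ESp d => ((d:ℝ)/(1+‖x‖^2))^(d:ℝ)) volume := by
    rw [hFeq]; exact hInt.const_mul _
  have hlint : ∫⁻ x : ESp d, (‖f x‖₊ : ℝ≥0∞) ^ (d:ℝ)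
      = ENNReal.ofReal ((d:ℝ)^(d:ℝ) * I) := by
    have step1 : ∫⁻ x : ESp d, (‖f x‖₊ : ℝ≥0∞) ^ (d:ℝ)
        = ∫⁻ x : ESp d, ENNReal.ofReal (((d:ℝ)/(1+‖x‖^2))^(d:ℝ)) := by
      apply lintegral_congr
      intro x
      rw [show ((‖f x‖₊ : ℝ≥0∞)) = ENNReal.ofReal ‖f x‖ by rw [← coe_nnnorm, ENNReal.ofReal_coe_nnreal], hf x,
        ← ENNReal.ofReal_rpow_of_nonneg (by positivity) (by positivity)]
    rw [step1, ← ofReal_integral_eq_lintegral_ofReal hFInt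
      (Filter.Eventually.of_forall fun x => by positivity)]
    congr 1
    rw [hFeq, integral_const_mul]
  rw [eLpNorm_eq_lintegral_rpow_enorm_toReal hd0 hdt]
  simp only [ENNReal.toReal_natCast]
  rw [show (∫⁻ x : ESp d, ‖f x‖ₑ ^ (d:ℝ)) = _ from hlint]
  rw [ENNReal.ofReal_rpow_of_nonneg (by positivity) (by positivity : (0:ℝ) ≤ 1/(d:ℝ))]
  rw [ENNReal.toReal_ofReal (by positivity)]
  have e1 : ((d:ℝ)^(d:ℝ) * I)^((1:ℝ)/(d:ℝ)) = (d:ℝ) * I^((1:ℝ)/(d:ℝ)) := by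
    rw [Real.mul_rpow (by positivity) hI, ← Real.rpow_mul hdR.le,
      mul_one_div, div_self hdR.ne', Real.rpow_one]
  rw [e1, mul_pow, ← Real.rpow_natCast (I^((1:ℝ)/(d:ℝ))) 2, ← Real.rpow_mul hI]
  congr 1
  push_cast
  ring

/-- `|𝒜(x)| = d/(1+|x|²)`, and the `L^d` norm of `𝒜` saturates the
bound: `‖𝒜‖_{L^d}² = d²(∫(1+|x|²)^{-d})^{2/d} = (d²/4)|𝕊^d|^{2/d} = (d/(d-2))S_d`. -/
theorem curlyA_norm_and_Lp_norm
    (d : ℕ) (hd : 3 ≤ d) (hodd : Odd d) :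
    (∀ x : ESp d, ‖curlyA d x‖ = (d : ℝ) / (1 + ‖x‖ ^ 2))
    ∧ (eLpNorm (curlyA d) (d : ℝ≥0∞) volume).toReal ^ 2
        = (d : ℝ) ^ 2 * (∫ x : ESp d, (1 + ‖x‖ ^ 2) ^ (-(d : ℝ))) ^ ((2 : ℝ) / (d : ℝ))
    ∧ (d : ℝ) ^ 2 * (∫ x : ESp d, (1 + ‖x‖ ^ 2) ^ (-(d : ℝ))) ^ ((2 : ℝ) / (d : ℝ))
        = ((d : ℝ) ^ 2 / 4) * sphereVol d ^ ((2 : ℝ) / (d : ℝ))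
    ∧ ((d : ℝ) ^ 2 / 4) * sphereVol d ^ ((2 : ℝ) / (d : ℝ))
        = ((d : ℝ) / ((d : ℝ) - 2)) * Sd d := by
  have hive := norm_curlyA hd hodd
  have hd2ne : ((d:ℝ)) - 2 ≠ 0 := by
    have h3 : (3:ℝ) ≤ (d:ℝ) := by exact_mod_cast hd
    linarith
  have h4 : ((2:ℝ)^d)^((2:ℝ)/(d:ℝ)) = 4 := by
    rw [← Real.rpow_natCast (2:ℝ) d, ← Real.rpow_mul (by norm_num : (0:ℝ) ≤ 2),
      show (d:ℝ) * ((2:ℝ)/(d:ℝ)) = 2 by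
        field_simp]
    norm_num
  refine ⟨hive, eLpNorm_part d hd (curlyA d) hive, ?_, ?_⟩
  · rw [key_integral' d hd, Real.div_rpow (sphereVol_nonneg d) (by positivity), h4]
    ring
  · rw [Sd]
    field_simp
end
end

section
/- Let d ≥ 3, let φ_0, φ_1 ∈ ℂ^N, and define the spinor field ψ(x) := (1+|x|²)^{−d/2} (φ_0 + (γ·x) φ_1). Then for all x ∈ ℝ^d: γ·(-i∇)ψ(x) = −i d (1+|x|²)^{−(d+2)/2} (φ_1 − (γ·x) φ_0). -/
open MeasureTheory Complex Filter ENNReal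

noncomputable section

/-- `γ·a = ∑ⱼ aⱼ γⱼ` for a real vector `a`. -/
def gdotR {d N : ℕ} (γ : Fin d → Matrix (Fin N) (Fin N) ℂ) (v : ESp d) :
    Matrix (Fin N) (Fin N) ℂ :=
  ∑ j, (v j : ℂ) • γ j

section Aux
variable {d N : ℕ}

lemma csmul_eq_rsmul (r : ℝ) (v : Spinor N) : (r : ℂ) • v = r • v := by
  rw [show ((r : ℂ)) = algebraMap ℝ ℂ r from rfl, algebraMap_smul]

lemma mulVecE_one (v : Spinor N) : mulVecE 1 v = v := by
  simp [mulVecE, Matrix.toEuclideanLin_apply]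

lemma mulVecE_mul (M M' : Matrix (Fin N) (Fin N) ℂ) (v : Spinor N) :
    mulVecE (M * M') v = mulVecE M (mulVecE M' v) := by
  simp [mulVecE, Matrix.toEuclideanLin_apply, Matrix.mulVec_mulVec]

lemma mulVecE_smul_mat (c : ℂ) (M : Matrix (Fin N) (Fin N) ℂ) (v : Spinor N) :
    mulVecE (c • M) v = c • mulVecE M v := by
  simp [mulVecE, _root_.map_smul]

lemma mulVecE_add_vec (M : Matrix (Fin N) (Fin N) ℂ) (u v : Spinor N) :
    mulVecE M (u + v) = mulVecE M u + mulVecE M v := by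
  simp [mulVecE, _root_.map_add]

lemma mulVecE_smul_vec (M : Matrix (Fin N) (Fin N) ℂ) (c : ℂ) (v : Spinor N) :
    mulVecE M (c • v) = c • mulVecE M v := by
  simp [mulVecE, _root_.map_smul]

lemma mulVecE_rsmul_vec (M : Matrix (Fin N) (Fin N) ℂ) (r : ℝ) (v : Spinor N) :
    mulVecE M (r • v) = r • mulVecE M v := by
  rw [← csmul_eq_rsmul, mulVecE_smul_vec, csmul_eq_rsmul]

lemma mulVecE_sum_mat {ι : Type*} (s : Finset ι) (M : ι → Matrix (Fin N) (Fin N) ℂ)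
    (v : Spinor N) : mulVecE (∑ i ∈ s, M i) v = ∑ i ∈ s, mulVecE (M i) v := by
  simp [mulVecE, map_sum]

lemma mulVecE_gdotR (γ : Fin d → Matrix (Fin N) (Fin N) ℂ) (y : ESp d) (v : Spinor N) :
    mulVecE (gdotR γ y) v = ∑ j, y j • mulVecE (γ j) v := by
  rw [gdotR, mulVecE_sum_mat]
  exact Finset.sum_congr rfl fun j _ => by rw [mulVecE_smul_mat, csmul_eq_rsmul]

lemma norm_sq_eq (x : ESp d) : ‖x‖ ^ 2 = ∑ j, x j ^ 2 := by
  rw [← real_inner_self_eq_norm_sq, PiLp.inner_apply]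
  simp [sq, RCLike.inner_apply]

lemma gdot_sq (γ : Fin d → Matrix (Fin N) (Fin N) ℂ)
    (hanti : ∀ j k, γ j * γ k + γ k * γ j = if j = k then (2 : ℂ) • 1 else 0)
    (x : ESp d) :
    gdotR γ x * gdotR γ x = ((‖x‖ ^ 2 : ℝ) : ℂ) • 1 := by
  have key : (2:ℂ) • (gdotR γ x * gdotR γ x) = (2:ℂ) • (((‖x‖ ^ 2 : ℝ) : ℂ) • 1) := by
    have expand : gdotR γ x * gdotR γ x
        = ∑ j, ∑ k, ((x j : ℂ) * (x k : ℂ)) • (γ j * γ k) := by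
      rw [gdotR, Finset.sum_mul_sum]
      refine Finset.sum_congr rfl fun j _ => Finset.sum_congr rfl fun k _ => ?_
      rw [smul_mul_smul_comm]
    have expand' : gdotR γ x * gdotR γ x
        = ∑ j, ∑ k, ((x j : ℂ) * (x k : ℂ)) • (γ k * γ j) := by
      rw [expand, Finset.sum_comm]
      refine Finset.sum_congr rfl fun j _ => Finset.sum_congr rfl fun k _ => ?_
      rw [mul_comm ((x j : ℂ))]
    calc (2:ℂ) • (gdotR γ x * gdotR γ x)
        = gdotR γ x * gdotR γ x + gdotR γ x * gdotR γ x := two_smul ℂ _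
      _ = ∑ j, ∑ k, ((x j : ℂ) * (x k : ℂ)) • (γ j * γ k + γ k * γ j) := by
          nth_rewrite 2 [expand']
          rw [expand, ← Finset.sum_add_distrib]
          refine Finset.sum_congr rfl fun j _ => ?_
          rw [← Finset.sum_add_distrib]
          exact Finset.sum_congr rfl fun k _ => (smul_add _ _ _).symm
      _ = ∑ j, ((x j : ℂ) * (x j : ℂ)) • ((2:ℂ) • (1 : Matrix (Fin N) (Fin N) ℂ)) := by
          refine Finset.sum_congr rfl fun j _ => ?_
          rw [Finset.sum_eq_single j]
          · rw [hanti j j, if_pos rfl]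
          · intro k _ hk; rw [hanti j k, if_neg (Ne.symm hk), smul_zero]
          · intro h; exact absurd (Finset.mem_univ j) h
      _ = (2:ℂ) • (((‖x‖ ^ 2 : ℝ) : ℂ) • 1) := by
          rw [norm_sq_eq]
          push_cast
          rw [Finset.sum_smul, Finset.smul_sum]
          refine Finset.sum_congr rfl fun j _ => ?_
          rw [smul_smul, smul_smul, sq, mul_comm]
  exact smul_right_injective _ (two_ne_zero) key

end Aux


/-- For `ψ(x) = (1+|x|²)^{-d/2}(φ₀ + (γ·x)φ₁)` one has
`γ·(-i∇)ψ(x) = -i d (1+|x|²)^{-(d+2)/2}(φ₁ - (γ·x)φ₀)`. -/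
theorem dirac_of_model_spinor
    (d : ℕ) (hd : 3 ≤ d) (N : ℕ) (hN : N = 2 ^ (d / 2))
    (γ : Fin d → Matrix (Fin N) (Fin N) ℂ)
    (hherm : ∀ j, (γ j).IsHermitian)
    (hanti : ∀ j k, γ j * γ k + γ k * γ j = if j = k then (2 : ℂ) • 1 else 0)
    (φ₀ φ₁ : Spinor N)
    (ψ : ESp d → Spinor N)
    (hψ : ψ = fun x => (((1 + ‖x‖ ^ 2) ^ (-(d : ℝ) / 2) : ℝ))
      • (φ₀ + mulVecE (gdotR γ x) φ₁)) :
    ∀ x : ESp d,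
      dirac γ ψ x
        = ((-Complex.I) * (d : ℂ))
            • ((((1 + ‖x‖ ^ 2) ^ (-((d : ℝ) + 2) / 2) : ℝ))
                • (φ₁ - mulVecE (gdotR γ x) φ₀)) := by
  intro x
  -- notation
  set c : ℝ := 1 + ‖x‖ ^ 2 with hc_def
  have hc : 0 < c := by positivity
  set p : ℝ := -(d : ℝ) / 2 with hp_def
  set g : ℝ := c ^ (p - 1) with hg_def
  have hexp : -((d : ℝ) + 2) / 2 = p - 1 := by rw [hp_def]; ring
  -- the linear map L
  set w : Fin d → Spinor N := fun j => mulVecE (γ j) φ₁ with hw_def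
  set L : ESp d →L[ℝ] Spinor N :=
    ∑ j, (EuclideanSpace.proj j : ESp d →L[ℝ] ℝ).smulRight (w j) with hL_def
  have hLapp : ∀ y : ESp d, L y = mulVecE (gdotR γ y) φ₁ := by
    intro y
    rw [mulVecE_gdotR, hL_def]
    simp [ContinuousLinearMap.sum_apply]
    rfl
  -- derivative of ψ at x
  set A := gdotR γ x with hA_def
  set u : Spinor N := φ₀ + L x with hu_def
  set D : ESp d →L[ℝ] Spinor N :=
    c ^ p • L + ((p * c ^ (p - 1)) • (2 • innerSL ℝ x)).smulRight u with hD_def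
  have hn : HasFDerivAt (fun y : ESp d => 1 + ‖y‖ ^ 2) (2 • innerSL ℝ x) x :=
    (hasStrictFDerivAt_norm_sq x).hasFDerivAt.const_add 1
  have hh : HasFDerivAt (fun y : ESp d => (1 + ‖y‖ ^ 2) ^ p)
      ((p * c ^ (p - 1)) • (2 • innerSL ℝ x)) x :=
    hn.rpow_const (Or.inl (ne_of_gt hc))
  have hF : HasFDerivAt (fun y : ESp d => φ₀ + L y) (L : ESp d →L[ℝ] Spinor N) x :=
    L.hasFDerivAt.const_add φ₀
  have hψx : HasFDerivAt ψ D x := by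
    have h1 : HasFDerivAt (fun y : ESp d => (1 + ‖y‖ ^ 2) ^ p • (φ₀ + L y))
        ((1 + ‖x‖ ^ 2) ^ p • L + ((p * c ^ (p - 1)) • (2 • innerSL ℝ x)).smulRight (φ₀ + L x)) x :=
      hh.smul hF
    rw [hψ]
    have : (fun y : ESp d => ((1 + ‖y‖ ^ 2) ^ (-(d : ℝ) / 2) : ℝ)
        • (φ₀ + mulVecE (gdotR γ y) φ₁)) = fun y : ESp d => (1 + ‖y‖ ^ 2) ^ p • (φ₀ + L y) := by
      funext y; rw [hLapp y, hp_def]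
    rw [this]
    exact h1
  -- compute partials
  have hpd : ∀ j : Fin d, pd j ψ x
      = c ^ p • w j + (p * c ^ (p - 1) * (2 * x j)) • u := by
    intro j
    have hip : (innerSL ℝ x) (EuclideanSpace.single j 1) = x j := by
      simp only [innerSL_apply_apply]
      rw [EuclideanSpace.inner_single_right]
      simp
    have hLe : L (EuclideanSpace.single j 1) = w j := by
      rw [hL_def]
      simp only [ContinuousLinearMap.sum_apply, ContinuousLinearMap.smulRight_apply]
      have hterm : ∀ k : Fin d,
          ((EuclideanSpace.proj k : ESp d →L[ℝ] ℝ) (EuclideanSpace.single j 1)) • w k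
          = if k = j then w j else 0 := by
        intro k
        have : (EuclideanSpace.proj k : ESp d →L[ℝ] ℝ) (EuclideanSpace.single j 1)
            = EuclideanSpace.single j (1:ℝ) k := rfl
        rw [this, EuclideanSpace.single_apply]
        by_cases h : k = j
        · subst h; simp
        · simp [h]
      rw [Finset.sum_congr rfl fun k _ => hterm k, Finset.sum_ite_eq' Finset.univ j,
        if_pos (Finset.mem_univ j)]
    rw [pd, hψx.fderiv, hD_def]
    simp only [ContinuousLinearMap.add_apply, ContinuousLinearMap.smul_apply,
      ContinuousLinearMap.smulRight_apply, smul_eq_mul, hip, hLe]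
    congr 1
    simp only [two_smul, ContinuousLinearMap.add_apply, hip]
    congr 1
    ring
  -- square of A
  have hsq : ∀ j, γ j * γ j = 1 := by
    intro j
    have h := hanti j j
    rw [if_pos rfl, ← two_smul ℂ (γ j * γ j)] at h
    exact smul_right_injective _ (two_ne_zero) h
  have hAu : mulVecE A u = mulVecE A φ₀ + (‖x‖ ^ 2 : ℝ) • φ₁ := by
    rw [hu_def, mulVecE_add_vec, hLapp x, ← hA_def, ← mulVecE_mul,
      gdot_sq γ hanti x, mulVecE_smul_mat, mulVecE_one, csmul_eq_rsmul]
  -- the sum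
  have hsum1 : ∑ j, mulVecE (γ j) (w j) = (d : ℝ) • φ₁ := by
    have : ∀ j : Fin d, mulVecE (γ j) (w j) = φ₁ := by
      intro j; rw [hw_def, ← mulVecE_mul, hsq j, mulVecE_one]
    rw [Finset.sum_congr rfl fun j _ => this j, Finset.sum_const,
      Finset.card_univ, Fintype.card_fin, Nat.cast_smul_eq_nsmul]
  have hdir : dirac γ ψ x
      = (-Complex.I) • (c ^ p • ((d : ℝ) • φ₁)
          + (-(d : ℝ) * c ^ (p - 1)) • (mulVecE A φ₀ + (‖x‖ ^ 2 : ℝ) • φ₁)) := by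
    rw [dirac]
    have step : ∀ j : Fin d, mulVecE (γ j) ((-Complex.I) • pd j ψ x)
        = (-Complex.I) • (c ^ p • mulVecE (γ j) (w j)
            + (p * c ^ (p - 1) * (2 * x j)) • mulVecE (γ j) u) := by
      intro j
      rw [mulVecE_smul_vec, hpd j, mulVecE_add_vec, mulVecE_rsmul_vec, mulVecE_rsmul_vec]
    rw [Finset.sum_congr rfl fun j _ => step j, ← Finset.smul_sum]
    congr 1
    rw [Finset.sum_add_distrib, ← Finset.smul_sum, hsum1]
    congr 1
    have : ∀ j : Fin d, (p * c ^ (p - 1) * (2 * x j)) • mulVecE (γ j) u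
        = (-(d : ℝ) * c ^ (p - 1)) • (x j • mulVecE (γ j) u) := by
      intro j
      rw [smul_smul]
      congr 1
      rw [hp_def]; ring
    rw [Finset.sum_congr rfl fun j _ => this j, ← Finset.smul_sum, ← mulVecE_gdotR, ← hA_def, hAu]
  -- final algebra
  rw [hdir, hexp, ← hg_def]
  have hcp : c ^ p = c * g := by
    rw [hg_def, Real.rpow_sub hc, Real.rpow_one]
    field_simp
  rw [show ((-Complex.I) * (d : ℂ)) • ((g : ℝ) • (φ₁ - mulVecE A φ₀))
      = (-Complex.I) • ((d : ℂ) • ((g : ℝ) • (φ₁ - mulVecE A φ₀))) from by rw [mul_smul]]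
  congr 1
  rw [show ((d : ℂ)) = (((d : ℝ) : ℂ)) from by push_cast; rfl, csmul_eq_rsmul, hcp, hc_def]
  module
end
end
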